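/- There exist a closed convex pentagon P ⊂ ℝ² of Euclidean diameter at most 1, a countable family of isometric copies of P whose union is all of ℝ² and whose interiors are pairwise disjoint (a tiling of the plane by congruent tiles), and a colouring of these tiles with 6 colours, such that any two distinct tiles of the same colour are at Euclidean distance at least √(55/56) from each other (i.e. dist(p, q) ≥ √(55/56) for all points p, q in the two tiles). -/

import Mathlib

noncomputable section

/-- The Euclidean plane ℝ². -/
abbrev Plane := EuclideanSpace ℝ (Fin 2)

open RealInnerProductSpace
namespace S19

def pt (x y : ℝ) : Plane := WithLp.toLp 2 ![x, y]

@[simp] lemma pt0 (x y : ℝ) : pt x y 0 = x := rfl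
@[simp] lemma pt1 (x y : ℝ) : pt x y 1 = y := rfl

lemma Plane.ext2 {p r : Plane} (h0 : p 0 = r 0) (h1 : p 1 = r 1) : p = r := by
  apply PiLp.ext; intro i
  fin_cases i <;> assumption

def qq : ℝ := Real.sqrt (1/896)
def cc : ℝ := Real.sqrt (55/896)

lemma qq_pos : 0 < qq := Real.sqrt_pos.2 (by norm_num)
lemma cc_pos : 0 < cc := Real.sqrt_pos.2 (by norm_num)
lemma qq_sq : qq^2 = 1/896 := Real.sq_sqrt (by norm_num)
lemma cc_sq : cc^2 = 55/896 := Real.sq_sqrt (by norm_num)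
lemma cc_sq' : cc^2 = 55*qq^2 := by rw [qq_sq, cc_sq]; norm_num

lemma inner_pt (x y x' y' : ℝ) : ⟪pt x y, pt x' y'⟫ = x*x' + y*y' := by
  simp [PiLp.inner_apply, Fin.sum_univ_two, pt]; ring

lemma dist_pt (x y x' y' : ℝ) :
    dist (pt x y) (pt x' y') = Real.sqrt ((x-x')^2 + (y-y')^2) := by
  rw [EuclideanSpace.dist_eq]
  simp [Fin.sum_univ_two, Real.dist_eq, sq_abs]

-- continuing
lemma hull_le (ν : Plane) (t : ℝ) (S : Set Plane) (h : ∀ x ∈ S, ⟪ν, x⟫ ≤ t) :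
    ∀ p ∈ convexHull ℝ S, ⟪ν, p⟫ ≤ t := by
  have hconv : Convex ℝ {p : Plane | ⟪ν, p⟫ ≤ t} :=
    convex_halfSpace_le ⟨fun a b => inner_add_right .., fun r a => real_inner_smul_right ..⟩ t
  intro p hp
  exact convexHull_min h hconv hp

lemma dist_lb (ν p r : Plane) (t1 t2 D : ℝ) (hD : 0 ≤ D) (hν : 0 < ⟪ν, ν⟫)
    (hp : ⟪ν, p⟫ ≤ t1) (hr : t2 ≤ ⟪ν, r⟫) (h1 : t1 ≤ t2)
    (h2 : D^2 * ⟪ν, ν⟫ ≤ (t2 - t1)^2) : D ≤ dist p r := by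
  have hin : t2 - t1 ≤ ⟪ν, r - p⟫ := by
    rw [inner_sub_right]; linarith
  have hcs : ⟪ν, r - p⟫ ≤ ‖ν‖ * ‖r - p‖ := real_inner_le_norm ..
  have hnn : ⟪ν, ν⟫ = ‖ν‖^2 := real_inner_self_eq_norm_sq ν
  have hdist : dist p r = ‖r - p‖ := by rw [dist_eq_norm, norm_sub_rev]
  have hnorm : 0 ≤ ‖r - p‖ := norm_nonneg _
  have hν' : 0 < ‖ν‖ := by nlinarith [norm_nonneg ν]
  have e1 : (t2-t1)^2 ≤ ‖ν‖^2 * ‖r - p‖^2 := by nlinarith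
  have e2 : D^2 * ‖ν‖^2 ≤ ‖r - p‖^2 * ‖ν‖^2 := by nlinarith
  have e3 : D^2 ≤ ‖r - p‖^2 := le_of_mul_le_mul_right e2 (by positivity)
  rw [hdist]
  nlinarith

lemma memHull (P : Fin 5 → Plane) (w : Fin 5 → ℝ) (h0 : ∀ j, 0 ≤ w j)
    (h1 : ∑ j, w j = 1) (p : Plane) (hp : p = ∑ j, w j • P j) :
    p ∈ convexHull ℝ (Set.range P) := by
  have := Finset.centerMass_mem_convexHull (Finset.univ : Finset (Fin 5))
    (w := w) (z := P) (fun i _ => h0 i) (by rw [h1]; norm_num)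
    (fun i _ => Set.mem_range_self i)
  rwa [Finset.centerMass, h1, inv_one, one_smul, ← hp] at this
def vv : Fin 5 → Plane :=
  ![pt 0 0, pt (2*cc) 0, pt (2*cc) (26*qq), pt cc (29*qq), pt 0 (26*qq)]

def HH : Set Plane := convexHull ℝ (Set.range vv)

lemma mem_H_of (ξ η : ℝ) (h0 : 0 ≤ ξ) (h2 : ξ ≤ 2*cc) (h3 : 0 ≤ η)
    (h4 : cc*η ≤ 26*qq*cc + 3*qq*ξ) (h5 : cc*η ≤ 26*qq*cc + 3*qq*(2*cc-ξ)) :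
    pt ξ η ∈ HH := by
  have hq := qq_pos; have hc := cc_pos
  rcases le_or_gt η (26*qq) with hcase | hcase
  · -- rectangle
    set a : ℝ := ξ/(2*cc) with ha
    set b : ℝ := η/(26*qq) with hb
    have ha0 : 0 ≤ a := by positivity
    have ha1 : a ≤ 1 := by rw [ha, div_le_one (by positivity)]; linarith
    have hb0 : 0 ≤ b := by positivity
    have hb1 : b ≤ 1 := by rw [hb, div_le_one (by positivity)]; linarith
    refine memHull vv ![(1-a)*(1-b), a*(1-b), a*b, 0, (1-a)*b] ?_ ?_ _ ?_
    · intro j; fin_cases j <;> simp <;> nlinarith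
    · simp [Fin.sum_univ_five]; ring
    · apply Plane.ext2 <;>
      · simp [Fin.sum_univ_five, vv, pt, ha, hb]
        field_simp
        ring
  · -- roof triangle
    set l : ℝ := (η - 26*qq)/(3*qq) with hl
    set u : ℝ := (3*qq*ξ - cc*(η-26*qq))/(6*qq*cc) with hu
    have hl0 : 0 ≤ l := div_nonneg (by linarith) (by positivity)
    have hl1 : l ≤ 1 := by rw [hl, div_le_one (by positivity)]; nlinarith
    have hu0 : 0 ≤ u := by
      rw [hu]; apply div_nonneg _ (by positivity); nlinarith
    have hrest : 0 ≤ 1 - l - u := by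
      have key : l + u ≤ 1 := by
        rw [hl, hu, div_add_div _ _ (by positivity) (by positivity),
          div_le_one (by positivity)]
        nlinarith [h5, mul_pos hq hc]
      linarith
    refine memHull vv ![0, 0, u, l, 1-l-u] ?_ ?_ _ ?_
    · intro j; fin_cases j <;> simp <;> linarith
    · simp [Fin.sum_univ_five]; ring
    · apply Plane.ext2 <;>
      · simp [Fin.sum_univ_five, vv, pt, hl, hu]
        field_simp
        ring
lemma dist_le_one (a b a' b' : ℝ) (h : 55*(a-a')^2 + (b-b')^2 ≤ 896) :
    dist (pt (a*cc) (b*qq)) (pt (a'*cc) (b'*qq)) ≤ 1 := by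
  rw [dist_pt]
  rw [show (1:ℝ) = Real.sqrt 1 from (Real.sqrt_one).symm]
  apply Real.sqrt_le_sqrt
  have hc := cc_sq'; have hq := qq_sq
  nlinarith [sq_nonneg (a-a'), sq_nonneg (b-b'), qq_sq]

lemma vv_pt : ∀ j : Fin 5, ∃ a b : ℝ, vv j = pt (a*cc) (b*qq) ∧
    ((a = 0 ∧ b = 0) ∨ (a = 2 ∧ b = 0) ∨ (a = 2 ∧ b = 26) ∨ (a = 1 ∧ b = 29)
      ∨ (a = 0 ∧ b = 26)) := by
  intro j
  fin_cases j
  · exact ⟨0, 0, by simp [vv, pt], by tauto⟩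
  · exact ⟨2, 0, by simp [vv, pt], by tauto⟩
  · exact ⟨2, 26, by simp [vv], by tauto⟩
  · exact ⟨1, 29, by simp [vv, pt], by tauto⟩
  · exact ⟨0, 26, by simp [vv, pt], by tauto⟩

lemma H_diam : ∀ p ∈ HH, ∀ r ∈ HH, dist p r ≤ 1 := by
  intro p hp r hr
  have hcvx : Convex ℝ HH := convex_convexHull ℝ _
  obtain ⟨y, ⟨j, rfl⟩, h1⟩ := (convexOn_dist r hcvx).exists_ge_of_mem_convexHull
    (subset_convexHull ℝ _) hp
  have h2' : ConvexOn ℝ HH fun z => dist (vv j) z := by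
    simpa [dist_comm] using convexOn_dist (vv j) hcvx
  obtain ⟨y, ⟨j', rfl⟩, h2⟩ := h2'.exists_ge_of_mem_convexHull
    (subset_convexHull ℝ _) hr
  have : dist (vv j) (vv j') ≤ 1 := by
    obtain ⟨a, b, hab, hc1⟩ := vv_pt j
    obtain ⟨a', b', hab', hc2⟩ := vv_pt j'
    rw [hab, hab']
    apply dist_le_one
    rcases hc1 with ⟨rfl,rfl⟩|⟨rfl,rfl⟩|⟨rfl,rfl⟩|⟨rfl,rfl⟩|⟨rfl,rfl⟩ <;>
      rcases hc2 with ⟨rfl,rfl⟩|⟨rfl,rfl⟩|⟨rfl,rfl⟩|⟨rfl,rfl⟩|⟨rfl,rfl⟩ <;> norm_num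
  calc dist p r ≤ dist (vv j) r := h1
    _ ≤ dist (vv j) (vv j') := h2
    _ ≤ 1 := this

lemma vv_notin : ∀ i : Fin 5, vv i ∉ convexHull ℝ (vv '' {j : Fin 5 | j ≠ i}) := by
  have hq := qq_pos; have hc := cc_pos
  have key : ∀ (i : Fin 5) (ν : Plane) (t : ℝ),
      (∀ j : Fin 5, j ≠ i → ⟪ν, vv j⟫ ≤ t) → t < ⟪ν, vv i⟫ →
      vv i ∉ convexHull ℝ (vv '' {j : Fin 5 | j ≠ i}) := by
    intro i ν t hj hi hmem
    have := hull_le ν t _ (by rintro x ⟨j, hj', rfl⟩; exact hj j hj') _ hmem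
    linarith
  have hcq : cc^2 = 55*qq^2 := cc_sq'
  intro i
  fin_cases i
  · refine key _ (pt (-cc) (-qq)) (-26*qq^2) ?_ ?_
    · intro j hj
      fin_cases j
      · exact absurd rfl hj
      all_goals simp [vv, inner_pt]; try nlinarith
    · simp [vv, inner_pt]; try nlinarith
  · refine key _ (pt cc (-qq)) (84*qq^2) ?_ ?_
    · intro j hj
      fin_cases j
      case _ => simp [vv, inner_pt]; try nlinarith
      case _ => exact absurd rfl hj
      all_goals simp [vv, inner_pt]; try nlinarith
    · simp [vv, inner_pt]; try nlinarith
  · refine key _ (pt cc qq) (110*qq^2) ?_ ?_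
    · intro j hj
      fin_cases j
      case _ => simp [vv, inner_pt]; try nlinarith
      case _ => simp [vv, inner_pt]; try nlinarith
      case _ => exact absurd rfl hj
      all_goals simp [vv, inner_pt]; try nlinarith
    · simp [vv, inner_pt]; try nlinarith
  · refine key _ (pt 0 qq) (26*qq^2) ?_ ?_
    · intro j hj
      fin_cases j
      case _ => simp [vv, inner_pt]; try nlinarith
      case _ => simp [vv, inner_pt]; try nlinarith
      case _ => simp [vv, inner_pt]; try nlinarith
      case _ => exact absurd rfl hj
      all_goals simp [vv, inner_pt]; try nlinarith
    · simp [vv, inner_pt]; try nlinarith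
  · refine key _ (pt (-cc) qq) (0*qq^2) ?_ ?_
    · intro j hj
      fin_cases j
      case _ => simp [vv, inner_pt]; try nlinarith
      case _ => simp [vv, inner_pt]; try nlinarith
      case _ => simp [vv, inner_pt]; try nlinarith
      case _ => simp [vv, inner_pt]; try nlinarith
      case _ => exact absurd rfl hj
    · simp [vv, inner_pt]; try nlinarith

lemma vv_inj : Function.Injective vv := by
  intro j j' h
  by_contra hne
  apply vv_notin j
  rw [h]
  exact subset_convexHull ℝ _ ⟨j', fun hc : j' = j => hne hc.symm, rfl⟩
def upv (i m : ℤ) : Plane := pt (((2*i+3*m : ℤ):ℝ)*cc) (((55*m : ℤ):ℝ)*qq)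
def ctr (i m : ℤ) : Plane :=
  pt (((2*i+3*m+1 : ℤ):ℝ)/2*cc) (((55*(m+1) : ℤ):ℝ)/2*qq)

def fmap (i m : ℤ) (b : Bool) : Plane ≃ᵃⁱ[ℝ] Plane :=
  if b then AffineIsometryEquiv.pointReflection ℝ (ctr i m)
  else AffineIsometryEquiv.constVAdd ℝ Plane (upv i m)

def tile (i m : ℤ) (b : Bool) : Set Plane := (fmap i m b) '' HH

def XC (b : Bool) : Fin 5 → ℤ := if b then ![1,-1,-1,0,1] else ![0,2,2,1,0]
def YC (b : Bool) : Fin 5 → ℤ := if b then ![55,55,29,26,29] else ![0,0,26,29,26]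

def W (i m : ℤ) (b : Bool) : Fin 5 → Plane :=
  fun j => pt (((2*i+3*m + XC b j : ℤ) : ℝ)*cc) (((55*m + YC b j : ℤ) : ℝ)*qq)

lemma fmap_v (i m : ℤ) (b : Bool) (j : Fin 5) :
    fmap i m b (vv j) = W i m b j := by
  cases b <;> fin_cases j <;>
    refine Plane.ext2 ?_ ?_ <;>
    simp [fmap, W, XC, YC, vv, upv, ctr, AffineIsometryEquiv.pointReflection_apply,
        vsub_eq_sub, vadd_eq_add, Pi.add_apply, Pi.sub_apply] <;>
    (push_cast; ring)

lemma tile_hull (i m : ℤ) (b : Bool) :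
    tile i m b = convexHull ℝ (Set.range (W i m b)) := by
  unfold tile HH
  have hw : (⇑((fmap i m b).toAffineEquiv.toAffineMap)) ∘ vv = W i m b :=
    funext (fmap_v i m b)
  rw [show ⇑(fmap i m b) = ⇑((fmap i m b).toAffineEquiv.toAffineMap) from rfl,
    AffineMap.image_convexHull, ← Set.range_comp, hw]
lemma mem_tile_up (i m : ℤ) (p : Plane) (ξ η : ℝ)
    (hx : p 0 = ((2*i+3*m : ℤ):ℝ)*cc + ξ) (hy : p 1 = ((55*m : ℤ):ℝ)*qq + η)
    (h : pt ξ η ∈ HH) : p ∈ tile i m false := by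
  refine ⟨pt ξ η, h, ?_⟩
  apply Plane.ext2 <;>
    simp [fmap, upv, vadd_eq_add, Pi.add_apply, hx, hy] <;> ring

lemma mem_tile_down (i m : ℤ) (p : Plane) (ξ η : ℝ)
    (hx : p 0 = ((2*i+3*m+1 : ℤ):ℝ)*cc - ξ) (hy : p 1 = ((55*(m+1) : ℤ):ℝ)*qq - η)
    (h : pt ξ η ∈ HH) : p ∈ tile i m true := by
  refine ⟨pt ξ η, h, ?_⟩
  apply Plane.ext2 <;>
    simp [fmap, ctr, AffineIsometryEquiv.pointReflection_apply,
      vsub_eq_sub, vadd_eq_add, Pi.add_apply, Pi.sub_apply, hx, hy] <;> ring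

set_option maxHeartbeats 1000000 in
lemma cover (p : Plane) : ∃ i m b, p ∈ tile i m b := by
  have hq := qq_pos; have hc := cc_pos
  set x := p 0 with hxdef
  set y := p 1 with hydef
  set m : ℤ := ⌊y / (55*qq)⌋ with hm
  have hm1 : (m:ℝ) * (55*qq) ≤ y := by
    rw [hm]
    calc (⌊y / (55*qq)⌋ : ℝ) * (55*qq) ≤ y / (55*qq) * (55*qq) := by
          apply mul_le_mul_of_nonneg_right (Int.floor_le _) (by positivity)
      _ = y := by field_simp
  have hm2 : y < ((m:ℝ)+1) * (55*qq) := by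
    rw [hm]
    have h1 : y / (55*qq) < (⌊y / (55*qq)⌋ : ℝ) + 1 := Int.lt_floor_add_one _
    calc y = y / (55*qq) * (55*qq) := by field_simp
      _ < ((⌊y / (55*qq)⌋:ℝ)+1) * (55*qq) := by
          apply mul_lt_mul_of_pos_right h1 (by positivity)
  set η : ℝ := y - ((55*m : ℤ):ℝ)*qq with hη
  have hη0 : 0 ≤ η := by rw [hη]; push_cast; nlinarith
  have hη1 : η < 55*qq := by rw [hη]; push_cast; nlinarith
  set xb : ℝ := x - ((3*m : ℤ):ℝ)*cc with hxb
  rcases le_or_gt η (26*qq) with hcA | hcA'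
  · -- up tile body
    set i : ℤ := ⌊xb / (2*cc)⌋ with hi
    have hi1 : (i:ℝ) * (2*cc) ≤ xb := by
      rw [hi]
      calc (⌊xb / (2*cc)⌋ : ℝ) * (2*cc) ≤ xb / (2*cc) * (2*cc) := by
            apply mul_le_mul_of_nonneg_right (Int.floor_le _) (by positivity)
        _ = xb := by field_simp
    have hi2 : xb < ((i:ℝ)+1) * (2*cc) := by
      rw [hi]
      have h1 : xb / (2*cc) < (⌊xb / (2*cc)⌋ : ℝ) + 1 := Int.lt_floor_add_one _
      calc xb = xb / (2*cc) * (2*cc) := by field_simp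
        _ < ((⌊xb / (2*cc)⌋:ℝ)+1) * (2*cc) := by
            apply mul_lt_mul_of_pos_right h1 (by positivity)
    set ξ : ℝ := xb - (i:ℝ)*(2*cc) with hξ
    refine ⟨i, m, false, mem_tile_up i m p ξ η ?_ ?_ (mem_H_of ξ η (by linarith)
      (by linarith) hη0 ?_ ?_)⟩
    · rw [hξ, hxb]; push_cast; ring
    · rw [hη]; push_cast; ring
    · have k1 : cc*η ≤ 26*qq*cc := by nlinarith
      have k2 : 0 ≤ 3*qq*ξ := by
        have : 0 ≤ ξ := by linarith
        positivity
      linarith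
    · have k1 : cc*η ≤ 26*qq*cc := by nlinarith
      have k2 : 0 ≤ 3*qq*(2*cc - ξ) := by
        have : ξ ≤ 2*cc := by linarith
        have : 0 ≤ 2*cc - ξ := by linarith
        positivity
      linarith
  · rcases le_or_gt (29*qq) η with hcB | hcB'
    · -- down tile body
      set i : ℤ := ⌊(xb+cc) / (2*cc)⌋ with hi
      have hi1 : (i:ℝ) * (2*cc) ≤ xb + cc := by
        rw [hi]
        calc (⌊(xb+cc) / (2*cc)⌋ : ℝ) * (2*cc) ≤ (xb+cc) / (2*cc) * (2*cc) := by
              apply mul_le_mul_of_nonneg_right (Int.floor_le _) (by positivity)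
          _ = xb + cc := by field_simp
      have hi2 : xb + cc < ((i:ℝ)+1) * (2*cc) := by
        rw [hi]
        have h1 : (xb+cc) / (2*cc) < (⌊(xb+cc) / (2*cc)⌋ : ℝ) + 1 := Int.lt_floor_add_one _
        calc xb + cc = (xb+cc) / (2*cc) * (2*cc) := by field_simp
          _ < ((⌊(xb+cc) / (2*cc)⌋:ℝ)+1) * (2*cc) := by
              apply mul_lt_mul_of_pos_right h1 (by positivity)
      set ξ : ℝ := (i:ℝ)*(2*cc) + cc - xb with hξ
      set η' : ℝ := 55*qq - η with hη'
      refine ⟨i, m, true, mem_tile_down i m p ξ η' ?_ ?_ (mem_H_of ξ η' (by linarith)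
        (by linarith) (by linarith) ?_ ?_)⟩
      · rw [hξ, hxb]; push_cast; ring
      · rw [hη', hη]; push_cast; ring
      · have h26 : η' ≤ 26*qq := by rw [hη']; linarith
        have k1 : cc*η' ≤ 26*qq*cc := by nlinarith
        have k2 : 0 ≤ 3*qq*ξ := by
          have : 0 ≤ ξ := by rw [hξ]; linarith
          positivity
        linarith
      · have h26 : η' ≤ 26*qq := by rw [hη']; linarith
        have k1 : cc*η' ≤ 26*qq*cc := by nlinarith
        have k2 : 0 ≤ 3*qq*(2*cc - ξ) := by
          have : ξ ≤ 2*cc := by rw [hξ]; linarith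
          have : 0 ≤ 2*cc - ξ := by linarith
          positivity
        linarith
    · -- roof strip
      set i : ℤ := ⌊xb / (2*cc)⌋ with hi
      have hi1 : (i:ℝ) * (2*cc) ≤ xb := by
        rw [hi]
        calc (⌊xb / (2*cc)⌋ : ℝ) * (2*cc) ≤ xb / (2*cc) * (2*cc) := by
              apply mul_le_mul_of_nonneg_right (Int.floor_le _) (by positivity)
          _ = xb := by field_simp
      have hi2 : xb < ((i:ℝ)+1) * (2*cc) := by
        rw [hi]
        have h1 : xb / (2*cc) < (⌊xb / (2*cc)⌋ : ℝ) + 1 := Int.lt_floor_add_one _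
        calc xb = xb / (2*cc) * (2*cc) := by field_simp
          _ < ((⌊xb / (2*cc)⌋:ℝ)+1) * (2*cc) := by
              apply mul_lt_mul_of_pos_right h1 (by positivity)
      set ξ : ℝ := xb - (i:ℝ)*(2*cc) with hξ
      have hξ0 : 0 ≤ ξ := by linarith
      have hξ2 : ξ < 2*cc := by linarith
      rcases le_or_gt ξ cc with hxi | hxi
      · rcases le_or_gt (cc*(η - 26*qq)) (3*qq*ξ) with h4 | h4
        · -- up roof
          refine ⟨i, m, false, mem_tile_up i m p ξ η ?_ ?_ (mem_H_of ξ η hξ0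
            (by linarith) hη0 (by linarith) ?_)⟩
          · rw [hξ, hxb]; push_cast; ring
          · rw [hη]; push_cast; ring
          · have k3 : 3*qq*ξ ≤ 3*qq*(2*cc - ξ) := by nlinarith
            linarith
        · -- down tile i, left roof
          refine ⟨i, m, true, mem_tile_down i m p (cc - ξ) (55*qq - η) ?_ ?_
            (mem_H_of _ _ (by linarith) (by linarith) (by linarith) ?_ ?_)⟩
          · rw [hξ, hxb]; push_cast; ring
          · rw [hη]; push_cast; ring
          · -- cc*(55qq-η) ≤ 26qc + 3q(cc-ξ)  ⇔  26qc + 3qξ ≤ cc*η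
            have k1 : 3*qq*ξ < cc*(η - 26*qq) := h4
            nlinarith
          · -- cc*(55qq-η) ≤ 26qc + 3q(2cc-(cc-ξ)) ⇔ 26qc ≤ cη + 3qξ
            have k2 : 26*qq*cc < cc*η := by nlinarith
            have k3 : 0 ≤ 3*qq*ξ := by positivity
            nlinarith
      · rcases le_or_gt (cc*(η - 26*qq)) (3*qq*(2*cc - ξ)) with h5 | h5
        · -- up roof
          refine ⟨i, m, false, mem_tile_up i m p ξ η ?_ ?_ (mem_H_of ξ η hξ0
            (by linarith) hη0 ?_ (by linarith))⟩
          · rw [hξ, hxb]; push_cast; ring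
          · rw [hη]; push_cast; ring
          · have k3 : 3*qq*(2*cc - ξ) ≤ 3*qq*ξ := by nlinarith
            linarith
        · -- down tile i+1, right roof
          refine ⟨i+1, m, true, mem_tile_down (i+1) m p (3*cc - ξ) (55*qq - η) ?_ ?_
            (mem_H_of _ _ (by linarith) (by linarith) (by linarith) ?_ ?_)⟩
          · rw [hξ, hxb]; push_cast; ring
          · rw [hη]; push_cast; ring
          · -- cc*(55qq-η) ≤ 26qc + 3q(3cc-ξ) ⇔ 20qc + 3qξ ≤ cη
            have k1 : 3*qq*ξ < 6*qq*cc := by nlinarith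
            have k2 : 26*qq*cc < cc*η := by nlinarith
            nlinarith
          · -- cc*(55qq-η) ≤ 26qc + 3q(2cc-(3cc-ξ)) ⇔ 32qc ≤ cη + 3qξ
            have k1 : 3*qq*(2*cc - ξ) < cc*(η - 26*qq) := h5
            nlinarith
lemma ip (a b X Y : ℝ) :
    ⟪pt (a*cc) (b*qq), pt (X*cc) (Y*qq)⟫ = (55*a*X + b*Y)*qq^2 := by
  rw [inner_pt]
  linear_combination (a*X)*cc_sq'

lemma tile_ip_le (i m : ℤ) (b : Bool) (a bb t : ℝ)
    (h : ∀ j : Fin 5, 55*a*((2*i+3*m+XC b j : ℤ):ℝ) + bb*((55*m+YC b j : ℤ):ℝ) ≤ t) :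
    ∀ p ∈ tile i m b, ⟪pt (a*cc) (bb*qq), p⟫ ≤ t*qq^2 := by
  rw [tile_hull]
  apply hull_le
  rintro x ⟨j, rfl⟩
  rw [W, ip]
  have hq2 : (0:ℝ) ≤ qq^2 := by positivity
  exact mul_le_mul_of_nonneg_right (h j) hq2

lemma tile_ip_ge (i m : ℤ) (b : Bool) (a bb t : ℝ)
    (h : ∀ j : Fin 5, t ≤ 55*a*((2*i+3*m+XC b j : ℤ):ℝ) + bb*((55*m+YC b j : ℤ):ℝ)) :
    ∀ p ∈ tile i m b, t*qq^2 ≤ ⟪pt (a*cc) (bb*qq), p⟫ := by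
  intro p hp
  have := tile_ip_le i m b (-a) (-bb) (-t) (fun j => by linarith [h j]) p hp
  have hrw : pt (-a*cc) (-bb*qq) = -pt (a*cc) (bb*qq) := by
    apply Plane.ext2 <;> simp [pt] <;> ring
  rw [hrw, inner_neg_left] at this
  linarith

lemma ip_self (a bb : ℝ) :
    ⟪pt (a*cc) (bb*qq), pt (a*cc) (bb*qq)⟫ = (55*a^2 + bb^2)*qq^2 := by
  rw [ip]; ring

lemma interior_lt (ν : Plane) (hν : 0 < ⟪ν, ν⟫) (S : Set Plane) (t : ℝ)
    (h : ∀ p ∈ S, ⟪ν, p⟫ ≤ t) : ∀ p ∈ interior S, ⟪ν, p⟫ < t := by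
  intro p hp
  rcases (h p (interior_subset hp)).lt_or_eq with hlt | heq
  · exact hlt
  exfalso
  obtain ⟨ε, hε, hball⟩ := Metric.isOpen_iff.1 isOpen_interior p hp
  have hn : 0 < ‖ν‖ := by
    have : ⟪ν, ν⟫ = ‖ν‖^2 := real_inner_self_eq_norm_sq ν
    nlinarith [norm_nonneg ν]
  set r : ℝ := ε/(2*‖ν‖) with hr
  have hrpos : 0 < r := by positivity
  have hmem : p + r • ν ∈ Metric.ball p ε := by
    rw [Metric.mem_ball, dist_eq_norm]
    have : p + r • ν - p = r • ν := by abel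
    rw [this, norm_smul, Real.norm_eq_abs, abs_of_pos hrpos, hr]
    have hhalf : ε/(2*‖ν‖) * ‖ν‖ = ε/2 := by field_simp
    nlinarith [hhalf, hε]
  have := h _ (interior_subset (hball hmem))
  rw [inner_add_right, real_inner_smul_right, heq] at this
  nlinarith

lemma tiles_disj_of_sep (i m : ℤ) (b : Bool) (i' m' : ℤ) (b' : Bool)
    (a bb t : ℝ) (hν : 0 < 55*a^2 + bb^2)
    (h1 : ∀ j : Fin 5, 55*a*((2*i+3*m+XC b j : ℤ):ℝ) + bb*((55*m+YC b j : ℤ):ℝ) ≤ t)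
    (h2 : ∀ j : Fin 5, t ≤ 55*a*((2*i'+3*m'+XC b' j : ℤ):ℝ) + bb*((55*m'+YC b' j : ℤ):ℝ)) :
    interior (tile i m b) ∩ interior (tile i' m' b') = ∅ := by
  have hq2 : (0:ℝ) < qq^2 := by rw [qq_sq]; norm_num
  have hνpos : 0 < ⟪pt (a*cc) (bb*qq), pt (a*cc) (bb*qq)⟫ := by
    rw [ip_self]; exact mul_pos hν hq2
  have hA := interior_lt _ hνpos _ _ (tile_ip_le i m b a bb t h1)
  have hB : ∀ p ∈ interior (tile i' m' b'),
      ⟪-pt (a*cc) (bb*qq), p⟫ < -(t*qq^2) := by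
    apply interior_lt _ (by rwa [inner_neg_neg]) _ _
    intro p hp
    have := tile_ip_ge i' m' b' a bb t h2 p hp
    rw [inner_neg_left]
    linarith
  rw [Set.eq_empty_iff_forall_notMem]
  rintro p ⟨hp1, hp2⟩
  have := hA p hp1
  have := hB p hp2
  rw [inner_neg_left] at this
  linarith

lemma tile_dist_ge (i m : ℤ) (b : Bool) (i' m' : ℤ) (b' : Bool)
    (a bb t1 t2 : ℝ) (hν : 0 < 55*a^2 + bb^2) (hle : t1 ≤ t2)
    (hgap : 880*(55*a^2 + bb^2) ≤ (t2 - t1)^2)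
    (h1 : ∀ j : Fin 5, 55*a*((2*i+3*m+XC b j : ℤ):ℝ) + bb*((55*m+YC b j : ℤ):ℝ) ≤ t1)
    (h2 : ∀ j : Fin 5, t2 ≤ 55*a*((2*i'+3*m'+XC b' j : ℤ):ℝ) + bb*((55*m'+YC b' j : ℤ):ℝ)) :
    ∀ p ∈ tile i m b, ∀ r ∈ tile i' m' b', Real.sqrt (55/56) ≤ dist p r := by
  intro p hp r hr
  have hq2 : (0:ℝ) < qq^2 := by rw [qq_sq]; norm_num
  apply dist_lb (pt (a*cc) (bb*qq)) p r (t1*qq^2) (t2*qq^2) _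
    (Real.sqrt_nonneg _) (by rw [ip_self]; exact mul_pos hν hq2)
    (tile_ip_le i m b a bb t1 h1 p hp) (tile_ip_ge i' m' b' a bb t2 h2 r hr)
    (by nlinarith)
  rw [ip_self, Real.sq_sqrt (by norm_num : (0:ℝ) ≤ 55/56), qq_sq]
  nlinarith [hgap]
lemma disj_m_lt (i m : ℤ) (b : Bool) (i' m' : ℤ) (b' : Bool) (hm : m < m') :
    interior (tile i m b) ∩ interior (tile i' m' b') = ∅ := by
  have hm' : (m:ℝ) + 1 ≤ (m':ℝ) := by exact_mod_cast hm
  refine tiles_disj_of_sep i m b i' m' b' 0 1 (55*(m':ℝ)) (by norm_num) ?_ ?_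
  · intro j; cases b <;> fin_cases j <;> simp [XC, YC] <;> push_cast <;> linarith
  · intro j; cases b' <;> fin_cases j <;> simp [XC, YC] <;> push_cast <;> linarith

lemma disj_i_lt (i m : ℤ) (b : Bool) (i' : ℤ) (hi : i < i') :
    interior (tile i m b) ∩ interior (tile i' m b) = ∅ := by
  have hi' : (i:ℝ) + 1 ≤ (i':ℝ) := by exact_mod_cast hi
  refine tiles_disj_of_sep i m b i' m b 1 0
    (55*(2*(i:ℝ)+3*(m:ℝ)+(if b then 1 else 2))) (by norm_num) ?_ ?_
  · intro j; cases b <;> fin_cases j <;> simp [XC, YC] <;> push_cast <;> linarith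
  · intro j; cases b <;> fin_cases j <;> simp [XC, YC] <;> push_cast <;> linarith

lemma disj_updown (i m i' : ℤ) :
    interior (tile i m false) ∩ interior (tile i' m true) = ∅ := by
  rcases le_or_gt i' i with hle | hlt
  · -- down tile left of (or under) up tile: left roof edge, f = 165 X - 55 Y
    have hle' : (i':ℝ) ≤ (i:ℝ) := by exact_mod_cast hle
    rw [Set.inter_comm]
    refine tiles_disj_of_sep i' m true i m false 3 (-55)
      (165*(2*(i:ℝ)+3*(m:ℝ)) - 55*(55*(m:ℝ)) - 55*26) (by norm_num) ?_ ?_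
    · intro j; fin_cases j <;> simp [XC, YC] <;> push_cast <;> linarith
    · intro j; fin_cases j <;> simp [XC, YC] <;> push_cast <;> linarith
  · -- down tile right: right roof edge, f = 165 X + 55 Y
    have hlt' : (i:ℝ) + 1 ≤ (i':ℝ) := by exact_mod_cast hlt
    refine tiles_disj_of_sep i m false i' m true 3 55
      (165*(2*(i:ℝ)+3*(m:ℝ)) + 55*(55*(m:ℝ)) + 55*32) (by norm_num) ?_ ?_
    · intro j; fin_cases j <;> simp [XC, YC] <;> push_cast <;> linarith
    · intro j; fin_cases j <;> simp [XC, YC] <;> push_cast <;> linarith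

lemma tiles_disj (i m : ℤ) (b : Bool) (i' m' : ℤ) (b' : Bool)
    (hne : (i, m, b) ≠ (i', m', b')) :
    interior (tile i m b) ∩ interior (tile i' m' b') = ∅ := by
  rcases lt_trichotomy m m' with hm | rfl | hm
  · exact disj_m_lt i m b i' m' b' hm
  · rcases lt_trichotomy i i' with hi | rfl | hi
    · cases b <;> cases b'
      · exact disj_i_lt i m false i' hi
      · exact disj_updown i m i'
      · rw [Set.inter_comm]; exact disj_updown i' m i
      · exact disj_i_lt i m true i' hi
    · cases b <;> cases b'
      · exact absurd rfl hne
      · exact disj_updown i m i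
      · rw [Set.inter_comm]; exact disj_updown i m i
      · exact absurd rfl hne
    · cases b <;> cases b'
      · rw [Set.inter_comm]; exact disj_i_lt i' m false i hi
      · exact disj_updown i m i'
      · rw [Set.inter_comm]; exact disj_updown i' m i
      · rw [Set.inter_comm]; exact disj_i_lt i' m true i hi
  · rw [Set.inter_comm]; exact disj_m_lt i' m' b' i m b hm
lemma dist_m_eq (i m k : ℤ) (b : Bool) (hk : 1 ≤ k) :
    ∀ p ∈ tile i m b, ∀ r ∈ tile (i+3*k) m b, Real.sqrt (55/56) ≤ dist p r := by
  have hK : (1:ℝ) ≤ (k:ℝ) := by exact_mod_cast hk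
  refine tile_dist_ge i m b (i+3*k) m b 1 0
    (55*(2*(i:ℝ)+3*(m:ℝ)+(if b then 1 else 2)))
    (55*(2*(i:ℝ)+6*(k:ℝ)+3*(m:ℝ)+(if b then -1 else 0)))
    (by norm_num) ?_ ?_ ?_ ?_
  · cases b <;> simp <;> nlinarith
  · cases b <;> simp <;> nlinarith
  · intro j; cases b <;> fin_cases j <;> simp [XC, YC] <;> push_cast <;> linarith
  · intro j; cases b <;> fin_cases j <;> simp [XC, YC] <;> push_cast <;> linarith

lemma dist_m_succ_right (i m k : ℤ) (b : Bool) (hk : 1 ≤ k) :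
    ∀ p ∈ tile i m b, ∀ r ∈ tile (i+3*k) (m+1) b, Real.sqrt (55/56) ≤ dist p r := by
  have hK : (1:ℝ) ≤ (k:ℝ) := by exact_mod_cast hk
  refine tile_dist_ge i m b (i+3*k) (m+1) b 1 0
    (55*(2*(i:ℝ)+3*(m:ℝ)+(if b then 1 else 2)))
    (55*(2*(i:ℝ)+6*(k:ℝ)+3*(m:ℝ)+(if b then 2 else 3)))
    (by norm_num) ?_ ?_ ?_ ?_
  · cases b <;> simp <;> nlinarith
  · cases b <;> simp <;> nlinarith
  · intro j; cases b <;> fin_cases j <;> simp [XC, YC] <;> push_cast <;> linarith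
  · intro j; cases b <;> fin_cases j <;> simp [XC, YC] <;> push_cast <;> linarith

lemma dist_m_succ_left (i m k : ℤ) (b : Bool) (hk : k ≤ -2) :
    ∀ p ∈ tile i m b, ∀ r ∈ tile (i+3*k) (m+1) b, Real.sqrt (55/56) ≤ dist p r := by
  have hK : (k:ℝ) ≤ -2 := by exact_mod_cast hk
  refine tile_dist_ge i m b (i+3*k) (m+1) b (-1) 0
    (-55*(2*(i:ℝ)+3*(m:ℝ)) + (if b then 55 else 0))
    (-55*(2*(i:ℝ)+6*(k:ℝ)+3*(m:ℝ)) + (if b then -220 else -275))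
    (by norm_num) ?_ ?_ ?_ ?_
  · cases b <;> simp <;> nlinarith
  · cases b <;> simp <;> nlinarith
  · intro j; cases b <;> fin_cases j <;> simp [XC, YC] <;> push_cast <;> linarith
  · intro j; cases b <;> fin_cases j <;> simp [XC, YC] <;> push_cast <;> linarith

lemma dist_m_succ_k0 (i m : ℤ) (b : Bool) :
    ∀ p ∈ tile i m b, ∀ r ∈ tile i (m+1) b, Real.sqrt (55/56) ≤ dist p r := by
  refine tile_dist_ge i m b i (m+1) b 3 55
    (55*(3*(2*(i:ℝ)+3*(m:ℝ))+55*(m:ℝ)+(if b then 58 else 32)))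
    (55*(3*(2*(i:ℝ)+3*(m:ℝ))+55*(m:ℝ)+(if b then 90 else 64)))
    (by norm_num) ?_ ?_ ?_ ?_
  · cases b <;> simp <;> nlinarith
  · cases b <;> simp <;> nlinarith
  · intro j; cases b <;> fin_cases j <;> simp [XC, YC] <;> push_cast <;> linarith
  · intro j; cases b <;> fin_cases j <;> simp [XC, YC] <;> push_cast <;> linarith

lemma dist_m_succ_km1 (i m : ℤ) (b : Bool) :
    ∀ p ∈ tile i m b, ∀ r ∈ tile (i-3) (m+1) b, Real.sqrt (55/56) ≤ dist p r := by
  refine tile_dist_ge i m b (i-3) (m+1) b (-3) 55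
    (55*(-3*(2*(i:ℝ)+3*(m:ℝ))+55*(m:ℝ)+(if b then 58 else 26)))
    (55*(-3*(2*(i:ℝ)+3*(m:ℝ))+55*(m:ℝ)+(if b then 90 else 58)))
    (by norm_num) ?_ ?_ ?_ ?_
  · cases b <;> simp <;> nlinarith
  · cases b <;> simp <;> nlinarith
  · intro j; cases b <;> fin_cases j <;> simp [XC, YC] <;> push_cast <;> linarith
  · intro j; cases b <;> fin_cases j <;> simp [XC, YC] <;> push_cast <;> linarith

lemma dist_m_far (i m i' m' : ℤ) (b : Bool) (hm : m + 2 ≤ m') :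
    ∀ p ∈ tile i m b, ∀ r ∈ tile i' m' b, Real.sqrt (55/56) ≤ dist p r := by
  have hM : (m:ℝ) + 2 ≤ (m':ℝ) := by exact_mod_cast hm
  refine tile_dist_ge i m b i' m' b 0 1
    (55*(m:ℝ) + (if b then 55 else 29))
    (55*(m':ℝ) + (if b then 26 else 0))
    (by norm_num) ?_ ?_ ?_ ?_
  · cases b <;> simp <;> nlinarith
  · cases b <;> simp <;> nlinarith
  · intro j; cases b <;> fin_cases j <;> simp [XC, YC] <;> push_cast <;> linarith
  · intro j; cases b <;> fin_cases j <;> simp [XC, YC] <;> push_cast <;> linarith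

lemma tiles_dist (i m i' m' k : ℤ) (b : Bool) (hk : i' = i + 3*k)
    (hne : ¬(i = i' ∧ m = m')) :
    ∀ p ∈ tile i m b, ∀ r ∈ tile i' m' b, Real.sqrt (55/56) ≤ dist p r := by
  have symm : ∀ (i₁ m₁ i₂ m₂ : ℤ),
      (∀ p ∈ tile i₂ m₂ b, ∀ r ∈ tile i₁ m₁ b, Real.sqrt (55/56) ≤ dist p r) →
      (∀ p ∈ tile i₁ m₁ b, ∀ r ∈ tile i₂ m₂ b, Real.sqrt (55/56) ≤ dist p r) := by
    intro i₁ m₁ i₂ m₂ h p hp r hr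
    rw [dist_comm]
    exact h r hr p hp
  rcases lt_trichotomy m m' with hm | rfl | hm
  · -- m < m'
    rcases eq_or_lt_of_le (show m + 1 ≤ m' by omega) with rfl | hm2
    · -- m' = m + 1
      subst hk
      rcases lt_trichotomy k 0 with hk0 | rfl | hk0
      · rcases eq_or_lt_of_le (by omega : k ≤ -1) with rfl | hk1
        · have := dist_m_succ_km1 i m b
          simpa [sub_eq_add_neg] using this
        · exact dist_m_succ_left i m k b (by omega)
      · simpa using dist_m_succ_k0 i m b
      · exact dist_m_succ_right i m k b (by omega)
    · exact dist_m_far i m i' m' b (by omega)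
  · -- m = m'
    subst hk
    have hkne : k ≠ 0 := by
      intro h; exact hne ⟨by omega, rfl⟩
    rcases lt_or_gt_of_ne hkne with hneg | hpos
    · apply symm
      have := dist_m_eq (i+3*k) m (-k) b (by omega)
      simpa [show i + 3*k + 3*(-k) = i by ring] using this
    · exact dist_m_eq i m k b (by omega)
  · -- m > m'
    apply symm
    rcases eq_or_lt_of_le (show m' + 1 ≤ m by omega) with rfl | hm2
    · subst hk
      rcases lt_trichotomy k 0 with hk0 | rfl | hk0
      · have := dist_m_succ_right (i+3*k) m' (-k) b (by omega)
        simpa [show i + 3*k + 3*(-k) = i by ring] using this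
      · simpa using dist_m_succ_k0 i m' b
      · rcases eq_or_lt_of_le (by omega : 1 ≤ k) with rfl | hk1
        · have := dist_m_succ_km1 (i+3*1) m' b
          simpa using this
        · have := dist_m_succ_left (i+3*k) m' (-k) b (by omega)
          simpa [show i + 3*k + 3*(-k) = i by ring] using this
    · exact dist_m_far i' m' i m b (by omega)
def colz (z : ℤ × ℤ × Bool) : Fin 6 :=
  ⟨(z.1 % 3).toNat + (if z.2.2 then 3 else 0), by
    have h1 := Int.emod_nonneg z.1 (by norm_num : (3:ℤ) ≠ 0)
    have h2 := Int.emod_lt_of_pos z.1 (by norm_num : (0:ℤ) < 3)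
    split <;> omega⟩

lemma colz_eq {i m : ℤ} {b : Bool} {i' m' : ℤ} {b' : Bool}
    (h : colz (i, m, b) = colz (i', m', b')) : b = b' ∧ ∃ k, i' = i + 3*k := by
  have hval := congrArg Fin.val h
  simp only [colz] at hval
  have h1 := Int.emod_nonneg i (by norm_num : (3:ℤ) ≠ 0)
  have h2 := Int.emod_lt_of_pos i (by norm_num : (0:ℤ) < 3)
  have h3 := Int.emod_nonneg i' (by norm_num : (3:ℤ) ≠ 0)
  have h4 := Int.emod_lt_of_pos i' (by norm_num : (0:ℤ) < 3)
  have hb : b = b' := by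
    cases b <;> cases b' <;> simp_all <;> omega
  subst hb
  refine ⟨rfl, ?_⟩
  have hmod : i % 3 = i' % 3 := by
    cases b <;> simp_all <;> omega
  exact ⟨(i' - i)/3, by omega⟩

instance : Denumerable (ℤ × ℤ × Bool) := Denumerable.ofEncodableOfInfinite _

def EE : (ℤ × ℤ × Bool) ≃ ℕ := Denumerable.eqv (ℤ × ℤ × Bool)

end S19


open S19 in
/-- There exist a closed convex pentagon H ⊂ ℝ² of Euclidean diameter at
most 1 (the convex hull of 5 points, each of which is a genuine vertex), a countable
family of isometric copies of H tiling the plane (their union is ℝ² and their interiors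
are pairwise disjoint), and a 6-colouring of the tiles such that any two distinct tiles
of the same colour are at distance at least Real.sqrt (55 / 56) from each other. -/
theorem statement19 :
    ∃ (H : Set Plane) (v : Fin 5 → Plane),
      Function.Injective v ∧
      (∀ i : Fin 5, v i ∉ convexHull ℝ (v '' {j : Fin 5 | j ≠ i})) ∧
      H = convexHull ℝ (Set.range v) ∧
      (∀ p ∈ H, ∀ q ∈ H, dist p q ≤ 1) ∧
      ∃ (T : ℕ → Set Plane) (col : ℕ → Fin 6),
        (∀ n : ℕ, ∃ f : Plane ≃ᵢ Plane, T n = f '' H) ∧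
        (⋃ n : ℕ, T n) = Set.univ ∧
        (∀ n m : ℕ, n ≠ m → interior (T n) ∩ interior (T m) = ∅) ∧
        (∀ n m : ℕ, n ≠ m → col n = col m →
          ∀ p ∈ T n, ∀ q ∈ T m, (Real.sqrt (55 / 56) : ℝ) ≤ dist p q) := by
  refine ⟨HH, vv, vv_inj, vv_notin, rfl, H_diam, ?_⟩
  refine ⟨fun n => tile (EE.symm n).1 (EE.symm n).2.1 (EE.symm n).2.2,
    fun n => colz (EE.symm n), ?_, ?_, ?_, ?_⟩
  · intro n
    exact ⟨(fmap (EE.symm n).1 (EE.symm n).2.1 (EE.symm n).2.2).toIsometryEquiv, rfl⟩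
  · rw [Set.eq_univ_iff_forall]
    intro p
    obtain ⟨i, m, b, hmem⟩ := cover p
    refine Set.mem_iUnion.2 ⟨EE (i, m, b), ?_⟩
    simpa [Equiv.symm_apply_apply] using hmem
  · intro n n' hne
    have hzne : EE.symm n ≠ EE.symm n' := fun h => hne (by simpa using congrArg EE h)
    rcases hA : EE.symm n with ⟨i, m, b⟩
    rcases hB : EE.symm n' with ⟨i', m', b'⟩
    rw [hA, hB] at hzne
    simp only [hA, hB]
    exact tiles_disj i m b i' m' b' hzne
  · intro n n' hne hcol p hp q hq
    have hzne : EE.symm n ≠ EE.symm n' := fun h => hne (by simpa using congrArg EE h)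
    rcases hA : EE.symm n with ⟨i, m, b⟩
    rcases hB : EE.symm n' with ⟨i', m', b'⟩
    rw [hA, hB] at hzne
    simp only [hA, hB] at hcol hp hq
    obtain ⟨hb, k, hk⟩ := colz_eq hcol
    subst hb
    exact tiles_dist i m i' m' k b hk
      (fun ⟨e1, e2⟩ => hzne (by rw [e1, e2])) p hp q hq
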